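/- Let X, U : ℝ → ℝ, and let Y₀, x₀, u₀, A, B be real numbers with A > 0. Suppose that, as Y → Y₀ from the right, X(Y) = x₀ + A·(Y−Y₀)^8 + O((Y−Y₀)^9) and U(Y) = u₀ + B·(Y−Y₀)^6 + O((Y−Y₀)^7). Then X(Y) − x₀ > 0 for all Y > Y₀ sufficiently close to Y₀, and as Y → Y₀ from the right, U(Y) = u₀ + B·A^{−3/4}·(X(Y)−x₀)^{3/4} + O((X(Y)−x₀)^{7/8}). -/

import Mathlib

open Real Filter Topology Asymptotics

/-- `(s ^ n) ^ p = s ^ m` for nonneg `s` when `n * p = m`. -/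
lemma novikov_aux_pow_rpow (s : ℝ) (hs : 0 ≤ s) (n : ℕ) (p : ℝ) (m : ℕ)
    (h : (n : ℝ) * p = m) : (s ^ n) ^ p = s ^ m := by
  rw [← Real.rpow_natCast s n, ← Real.rpow_mul hs, h, Real.rpow_natCast]

/-- Hölder-type bound at `1`: `|t ^ (3/4) - 1| ≤ |t - 1|` for `t ≥ 0`. -/
lemma novikov_aux_holder (t : ℝ) (ht : 0 ≤ t) :
    |t ^ ((3 : ℝ) / 4) - 1| ≤ |t - 1| := by
  rcases eq_or_lt_of_le ht with h0 | h0
  · rw [← h0, Real.zero_rpow (by norm_num)]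
  rcases le_total 1 t with h | h
  · have h1 : (1 : ℝ) ≤ t ^ ((3 : ℝ) / 4) :=
      Real.one_le_rpow h (by norm_num)
    have h2 : t ^ ((3 : ℝ) / 4) ≤ t := by
      calc t ^ ((3 : ℝ) / 4) ≤ t ^ (1 : ℝ) :=
            Real.rpow_le_rpow_of_exponent_le h (by norm_num)
        _ = t := Real.rpow_one t
    rw [abs_of_nonneg (by linarith), abs_of_nonneg (by linarith)]
    linarith
  · have h1 : t ^ ((3 : ℝ) / 4) ≤ 1 := Real.rpow_le_one ht h (by norm_num)
    have h2 : t ≤ t ^ ((3 : ℝ) / 4) := by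
      calc t = t ^ (1 : ℝ) := (Real.rpow_one t).symm
        _ ≤ t ^ ((3 : ℝ) / 4) :=
            Real.rpow_le_rpow_of_exponent_ge h0 h (by norm_num)
    rw [abs_of_nonpos (by linarith), abs_of_nonpos (by linarith)]
    linarith

/-- Lipschitz-type bound for the `3/4` power:
`|a^(3/4) - b^(3/4)| ≤ |a - b| * b^(-1/4)` for `a ≥ 0`, `b > 0`. -/
lemma novikov_aux_rpow_diff (a b : ℝ) (ha : 0 ≤ a) (hb : 0 < b) :
    |a ^ ((3 : ℝ) / 4) - b ^ ((3 : ℝ) / 4)| ≤ |a - b| * b ^ (-(1 : ℝ) / 4) := by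
  have hb34 : (0 : ℝ) < b ^ ((3 : ℝ) / 4) := Real.rpow_pos_of_pos hb _
  have key : a ^ ((3 : ℝ) / 4) - b ^ ((3 : ℝ) / 4)
      = b ^ ((3 : ℝ) / 4) * ((a / b) ^ ((3 : ℝ) / 4) - 1) := by
    rw [Real.div_rpow ha hb.le, mul_sub, mul_one,
      mul_div_cancel₀ _ (ne_of_gt hb34)]
  rw [key, abs_mul, abs_of_pos hb34]
  have h1 : |(a / b) ^ ((3 : ℝ) / 4) - 1| ≤ |a / b - 1| :=
    novikov_aux_holder _ (div_nonneg ha hb.le)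
  have h2 : |a / b - 1| = |a - b| / b := by
    rw [show a / b - 1 = (a - b) / b by field_simp, abs_div, abs_of_pos hb]
  have h3 : b ^ ((3 : ℝ) / 4) * (|a - b| / b) = |a - b| * b ^ (-(1 : ℝ) / 4) := by
    rw [show (-(1 : ℝ) / 4) = (3 : ℝ) / 4 - 1 by norm_num, Real.rpow_sub hb,
      Real.rpow_one]
    ring
  calc b ^ ((3 : ℝ) / 4) * |(a / b) ^ ((3 : ℝ) / 4) - 1|
      ≤ b ^ ((3 : ℝ) / 4) * |a / b - 1| := by
        exact mul_le_mul_of_nonneg_left h1 hb34.le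
    _ = |a - b| * b ^ (-(1 : ℝ) / 4) := by rw [h2, h3]

/-- Inversion step for the Type I singularity profile of the Novikov equation:
from `X(Y) = x₀ + A(Y−Y₀)⁸ + O((Y−Y₀)⁹)` and `U(Y) = u₀ + B(Y−Y₀)⁶ + O((Y−Y₀)⁷)`
as `Y → Y₀⁺` with `A > 0`, one gets `X(Y) − x₀ > 0` near `Y₀⁺` and
`U(Y) = u₀ + B·A^{−3/4}·(X(Y)−x₀)^{3/4} + O((X(Y)−x₀)^{7/8})`. -/
theorem novikov_typeI_profile_inversion
    (X U : ℝ → ℝ) (Y₀ x₀ u₀ A B : ℝ) (hA : 0 < A)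
    (hX : (fun Y => X Y - x₀ - A * (Y - Y₀) ^ 8) =O[𝓝[>] Y₀]
            (fun Y => (Y - Y₀) ^ 9))
    (hU : (fun Y => U Y - u₀ - B * (Y - Y₀) ^ 6) =O[𝓝[>] Y₀]
            (fun Y => (Y - Y₀) ^ 7)) :
    (∀ᶠ Y in 𝓝[>] Y₀, 0 < X Y - x₀) ∧
      (fun Y => U Y - u₀ - B * A ^ (-(3 : ℝ) / 4) * (X Y - x₀) ^ ((3 : ℝ) / 4))
        =O[𝓝[>] Y₀] (fun Y => (X Y - x₀) ^ ((7 : ℝ) / 8)) := by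
  obtain ⟨C₁, hC₁pos, hXb⟩ := hX.exists_pos
  obtain ⟨C₂, hC₂pos, hUb⟩ := hU.exists_pos
  have hXb' := hXb.bound
  have hUb' := hUb.bound
  have hδ : 0 < A / (2 * C₁) := by positivity
  have hsmall : ∀ᶠ Y in 𝓝[>] Y₀, Y - Y₀ < A / (2 * C₁) := by
    have h : ∀ᶠ Y in 𝓝 Y₀, Y - Y₀ < A / (2 * C₁) := by
      have := eventually_lt_nhds (show Y₀ < Y₀ + A / (2 * C₁) by linarith)
      filter_upwards [this] with Y h; linarith
    exact h.filter_mono nhdsWithin_le_nhds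
  have hpos0 : ∀ᶠ Y in 𝓝[>] Y₀, Y₀ < Y := self_mem_nhdsWithin
  set D : ℝ := C₂ + |B| * A⁻¹ * C₁ with hD
  have hDnn : 0 ≤ D := by positivity
  set C₃ : ℝ := D * (A / 2) ^ (-(7 : ℝ) / 8) with hC₃
  have key : ∀ᶠ Y in 𝓝[>] Y₀,
      0 < X Y - x₀ ∧
      |U Y - u₀ - B * A ^ (-(3 : ℝ) / 4) * (X Y - x₀) ^ ((3 : ℝ) / 4)| ≤
        C₃ * |(X Y - x₀) ^ ((7 : ℝ) / 8)| := by
    filter_upwards [hXb', hUb', hsmall, hpos0] with Y h1 h2 h3 h4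
    set s : ℝ := Y - Y₀ with hsdef
    have hs : 0 < s := sub_pos.mpr h4
    have hs8 : (0 : ℝ) < s ^ 8 := by positivity
    rw [Real.norm_eq_abs, Real.norm_eq_abs, abs_of_pos (by positivity : (0:ℝ) < s ^ 9)] at h1
    rw [Real.norm_eq_abs, Real.norm_eq_abs, abs_of_pos (by positivity : (0:ℝ) < s ^ 7)] at h2
    -- step 1 : error bound on X
    have hCs : C₁ * s ^ 9 ≤ A / 2 * s ^ 8 := by
      have hmul : C₁ * s ≤ A / 2 := by
        have := mul_lt_mul_of_pos_left h3 hC₁pos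
        have heq : C₁ * (A / (2 * C₁)) = A / 2 := by field_simp
        linarith [heq ▸ this]
      calc C₁ * s ^ 9 = (C₁ * s) * s ^ 8 := by ring
        _ ≤ A / 2 * s ^ 8 := mul_le_mul_of_nonneg_right hmul hs8.le
    have habs := abs_le.mp (h1.trans hCs)
    set a : ℝ := X Y - x₀ with hadef
    set b : ℝ := A * s ^ 8 with hbdef
    have hblb : A / 2 * s ^ 8 ≤ a := by
      have : -(A / 2 * s ^ 8) ≤ a - b := habs.1
      rw [hbdef] at this; nlinarith
    have hapos : 0 < a := lt_of_lt_of_le (by positivity) hblb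
    refine ⟨hapos, ?_⟩
    have hbpos : 0 < b := by rw [hbdef]; positivity
    -- step 2 : rpow algebra
    have hb34 : b ^ ((3 : ℝ) / 4) = A ^ ((3 : ℝ) / 4) * s ^ 6 := by
      rw [hbdef, Real.mul_rpow hA.le hs8.le,
        novikov_aux_pow_rpow s hs.le 8 ((3 : ℝ) / 4) 6 (by norm_num)]
    have hBsimp : B * s ^ 6 = B * A ^ (-(3 : ℝ) / 4) * b ^ ((3 : ℝ) / 4) := by
      rw [hb34, show B * A ^ (-(3 : ℝ) / 4) * (A ^ ((3 : ℝ) / 4) * s ^ 6)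
          = B * (A ^ (-(3 : ℝ) / 4) * A ^ ((3 : ℝ) / 4)) * s ^ 6 by ring,
        ← Real.rpow_add hA, show (-(3 : ℝ) / 4 + 3 / 4) = 0 by norm_num,
        Real.rpow_zero, mul_one]
    have hbneg14 : b ^ (-(1 : ℝ) / 4) = A ^ (-(1 : ℝ) / 4) * (s ^ 2)⁻¹ := by
      rw [hbdef, Real.mul_rpow hA.le hs8.le,
        show (-(1 : ℝ) / 4) = -((1 : ℝ) / 4) by norm_num,
        Real.rpow_neg hs8.le,
        novikov_aux_pow_rpow s hs.le 8 ((1 : ℝ) / 4) 2 (by norm_num)]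
    -- step 3 : the intermediate O(s^7) bound
    have hdiff : |a ^ ((3 : ℝ) / 4) - b ^ ((3 : ℝ) / 4)|
        ≤ C₁ * A ^ (-(1 : ℝ) / 4) * s ^ 7 := by
      have h := novikov_aux_rpow_diff a b hapos.le hbpos
      have h5 : |a - b| * b ^ (-(1 : ℝ) / 4)
          ≤ (C₁ * s ^ 9) * (A ^ (-(1 : ℝ) / 4) * (s ^ 2)⁻¹) := by
        rw [hbneg14]
        apply mul_le_mul (h1.trans (le_refl _)) (le_refl _)
          (by positivity) (by positivity)
      have h6 : (C₁ * s ^ 9) * (A ^ (-(1 : ℝ) / 4) * (s ^ 2)⁻¹)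
          = C₁ * A ^ (-(1 : ℝ) / 4) * s ^ 7 := by
        field_simp
      linarith [h.trans (h5.trans_eq h6)]
    have hmain : |U Y - u₀ - B * A ^ (-(3 : ℝ) / 4) * a ^ ((3 : ℝ) / 4)|
        ≤ D * s ^ 7 := by
      have htri : |U Y - u₀ - B * A ^ (-(3 : ℝ) / 4) * a ^ ((3 : ℝ) / 4)|
          ≤ |U Y - u₀ - B * s ^ 6|
            + |B| * A ^ (-(3 : ℝ) / 4) * |a ^ ((3 : ℝ) / 4) - b ^ ((3 : ℝ) / 4)| := by
        have hid : U Y - u₀ - B * A ^ (-(3 : ℝ) / 4) * a ^ ((3 : ℝ) / 4)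
            = (U Y - u₀ - B * s ^ 6)
              + B * A ^ (-(3 : ℝ) / 4) * (b ^ ((3 : ℝ) / 4) - a ^ ((3 : ℝ) / 4)) := by
          rw [hBsimp]; ring
        calc |U Y - u₀ - B * A ^ (-(3 : ℝ) / 4) * a ^ ((3 : ℝ) / 4)|
            ≤ |U Y - u₀ - B * s ^ 6|
              + |B * A ^ (-(3 : ℝ) / 4) * (b ^ ((3 : ℝ) / 4) - a ^ ((3 : ℝ) / 4))| := by
              rw [hid]; exact abs_add_le _ _
          _ = |U Y - u₀ - B * s ^ 6|
              + |B| * A ^ (-(3 : ℝ) / 4) * |a ^ ((3 : ℝ) / 4) - b ^ ((3 : ℝ) / 4)| := by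
              rw [abs_mul, abs_mul, abs_of_pos (Real.rpow_pos_of_pos hA _),
                abs_sub_comm (b ^ ((3 : ℝ) / 4)) (a ^ ((3 : ℝ) / 4))]
      have hA34 : 0 < A ^ (-(3 : ℝ) / 4) := Real.rpow_pos_of_pos hA _
      have hstep : |B| * A ^ (-(3 : ℝ) / 4) * |a ^ ((3 : ℝ) / 4) - b ^ ((3 : ℝ) / 4)|
          ≤ |B| * A⁻¹ * C₁ * s ^ 7 := by
        have h7 : |B| * A ^ (-(3 : ℝ) / 4) * (C₁ * A ^ (-(1 : ℝ) / 4) * s ^ 7)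
            = |B| * A⁻¹ * C₁ * s ^ 7 := by
          rw [show |B| * A ^ (-(3 : ℝ) / 4) * (C₁ * A ^ (-(1 : ℝ) / 4) * s ^ 7)
              = |B| * (A ^ (-(3 : ℝ) / 4) * A ^ (-(1 : ℝ) / 4)) * C₁ * s ^ 7 by ring,
            ← Real.rpow_add hA, show (-(3 : ℝ) / 4 + -(1) / 4) = -1 by norm_num,
            Real.rpow_neg_one]
        calc |B| * A ^ (-(3 : ℝ) / 4) * |a ^ ((3 : ℝ) / 4) - b ^ ((3 : ℝ) / 4)|
            ≤ |B| * A ^ (-(3 : ℝ) / 4) * (C₁ * A ^ (-(1 : ℝ) / 4) * s ^ 7) :=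
              mul_le_mul_of_nonneg_left hdiff (by positivity)
          _ = |B| * A⁻¹ * C₁ * s ^ 7 := h7
      calc |U Y - u₀ - B * A ^ (-(3 : ℝ) / 4) * a ^ ((3 : ℝ) / 4)|
          ≤ |U Y - u₀ - B * s ^ 6|
            + |B| * A ^ (-(3 : ℝ) / 4) * |a ^ ((3 : ℝ) / 4) - b ^ ((3 : ℝ) / 4)| := htri
        _ ≤ C₂ * s ^ 7 + |B| * A⁻¹ * C₁ * s ^ 7 := add_le_add h2 hstep
        _ = D * s ^ 7 := by rw [hD]; ring
    -- step 4 : compare s^7 with a^(7/8)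
    have hs7 : s ^ 7 ≤ (A / 2) ^ (-(7 : ℝ) / 8) * a ^ ((7 : ℝ) / 8) := by
      have hlow : (A / 2) ^ ((7 : ℝ) / 8) * s ^ 7 ≤ a ^ ((7 : ℝ) / 8) := by
        have := Real.rpow_le_rpow (by positivity : (0:ℝ) ≤ A / 2 * s ^ 8) hblb
          (by norm_num : (0:ℝ) ≤ (7 : ℝ) / 8)
        rwa [Real.mul_rpow (by positivity) hs8.le,
          novikov_aux_pow_rpow s hs.le 8 ((7 : ℝ) / 8) 7 (by norm_num)] at this
      have hA2 : (0 : ℝ) < (A / 2) ^ ((7 : ℝ) / 8) := Real.rpow_pos_of_pos (by linarith) _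
      have hinv : (A / 2) ^ (-(7 : ℝ) / 8) * (A / 2) ^ ((7 : ℝ) / 8) = 1 := by
        rw [← Real.rpow_add (by linarith), show (-(7 : ℝ) / 8 + 7 / 8) = 0 by norm_num,
          Real.rpow_zero]
      have := mul_le_mul_of_nonneg_left hlow
        (le_of_lt (Real.rpow_pos_of_pos (by linarith : (0:ℝ) < A / 2) (-(7 : ℝ) / 8)))
      calc s ^ 7 = (A / 2) ^ (-(7 : ℝ) / 8) * ((A / 2) ^ ((7 : ℝ) / 8) * s ^ 7) := by
            rw [← mul_assoc, hinv, one_mul]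
        _ ≤ (A / 2) ^ (-(7 : ℝ) / 8) * a ^ ((7 : ℝ) / 8) := this
    have ha78 : |a ^ ((7 : ℝ) / 8)| = a ^ ((7 : ℝ) / 8) :=
      abs_of_pos (Real.rpow_pos_of_pos hapos _)
    rw [ha78]
    calc |U Y - u₀ - B * A ^ (-(3 : ℝ) / 4) * a ^ ((3 : ℝ) / 4)|
        ≤ D * s ^ 7 := hmain
      _ ≤ D * ((A / 2) ^ (-(7 : ℝ) / 8) * a ^ ((7 : ℝ) / 8)) :=
          mul_le_mul_of_nonneg_left hs7 hDnn
      _ = C₃ * a ^ ((7 : ℝ) / 8) := by rw [hC₃]; ring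
  constructor
  · filter_upwards [key] with Y hY using hY.1
  · rw [isBigO_iff]
    refine ⟨C₃, ?_⟩
    filter_upwards [key] with Y hY
    rw [Real.norm_eq_abs, Real.norm_eq_abs]
    exact hY.2
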